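/- Let G be a graph with a split (A,B,A',B'), and let G_A, G_B be the graphs obtained by applying it. Then |E(G_A)| + |E(G_B)| = |E(G)| − |A|·|B| + |A| + |B|. In particular, if |A|·|B| ≥ |A| + |B| (e.g., if |A|,|B| ≥ 2), then |E(G_A)| + |E(G_B)| ≤ |E(G)|. -/

import Mathlib

/-- A split of a graph `G`: a partition `(A, B, A', B')` of the vertex set such that
every vertex of `A` is adjacent to every vertex of `B`, there are no edges between
`A'` and `B ∪ B'`, no edges between `B'` and `A ∪ A'`, and both sides have size ≥ 2. -/
structure IsSplit {V : Type*} (G : SimpleGraph V) (A B A' B' : Set V) : Prop where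
  cover : A ∪ B ∪ A' ∪ B' = Set.univ
  dAB : Disjoint A B
  dAA' : Disjoint A A'
  dAB' : Disjoint A B'
  dBA' : Disjoint B A'
  dBB' : Disjoint B B'
  dA'B' : Disjoint A' B'
  complete : ∀ a ∈ A, ∀ b ∈ B, G.Adj a b
  noA' : ∀ x ∈ A', ∀ y ∈ B ∪ B', ¬ G.Adj x y
  noB' : ∀ x ∈ B', ∀ y ∈ A ∪ A', ¬ G.Adj x y
  sideA : 2 ≤ (A ∪ A').ncard
  sideB : 2 ≤ (B ∪ B').ncard

/-- The graph obtained from one side of a split: the induced subgraph on `S`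
plus a new marker vertex (`none`) adjacent exactly to the vertices of `M ⊆ S`. -/
def sideGraph {V : Type*} (G : SimpleGraph V) (S M : Set V) : SimpleGraph (Option ↥S) where
  Adj x y :=
    match x, y with
    | some u, some v => G.Adj u v
    | some u, none => (u : V) ∈ M
    | none, some v => (v : V) ∈ M
    | none, none => False
  symm := by
    constructor
    rintro (_ | u) (_ | v) h
    · exact h
    · exact h
    · exact h
    · exact h.symm
  loopless := by
    constructor
    rintro (_ | u) h
    · exact h
    · exact G.irrefl h

def splitEquiv {V : Type*} (G : SimpleGraph V) (S M : Set V) (hMS : M ⊆ S) :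
    {p : Option ↥S × Option ↥S // (sideGraph G S M).Adj p.1 p.2} ≃
      ({p : V × V // G.Adj p.1 p.2 ∧ p.1 ∈ S ∧ p.2 ∈ S} ⊕ (↥M ⊕ ↥M)) where
  toFun := fun x => match x with
    | ⟨(some u, some v), h⟩ => Sum.inl ⟨(↑u, ↑v), h, u.2, v.2⟩
    | ⟨(some u, none), h⟩ => Sum.inr (Sum.inl ⟨↑u, h⟩)
    | ⟨(none, some v), h⟩ => Sum.inr (Sum.inr ⟨↑v, h⟩)
    | ⟨(none, none), h⟩ => h.elim
  invFun := fun x => match x with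
    | Sum.inl ⟨(a, b), h⟩ => ⟨(some ⟨a, h.2.1⟩, some ⟨b, h.2.2⟩), h.1⟩
    | Sum.inr (Sum.inl ⟨m, hm⟩) => ⟨(some ⟨m, hMS hm⟩, none), hm⟩
    | Sum.inr (Sum.inr ⟨m, hm⟩) => ⟨(none, some ⟨m, hMS hm⟩), hm⟩
  left_inv := by rintro ⟨⟨(_ | u), (_ | v)⟩, h⟩ <;> first | rfl | exact h.elim
  right_inv := by rintro (⟨⟨a, b⟩, h⟩ | ⟨m, hm⟩ | ⟨m, hm⟩) <;> rfl

open Finset in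
lemma two_mul_nat_card_edgeSet {W : Type*} [Finite W] (H : SimpleGraph W) :
    2 * Nat.card H.edgeSet = Nat.card {p : W × W | H.Adj p.1 p.2} := by
  classical
  have : Fintype W := Fintype.ofFinite W
  rw [Nat.card_coe_set_eq, Set.ncard_eq_toFinset_card', ← SimpleGraph.edgeFinset,
    Nat.card_coe_set_eq, Set.ncard_eq_toFinset_card', SimpleGraph.two_mul_card_edgeFinset]
  congr 1
  ext ⟨x, y⟩
  simp

lemma side_card {V : Type*} [Finite V] (G : SimpleGraph V) (S M : Set V) (hMS : M ⊆ S) :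
    2 * Nat.card (sideGraph G S M).edgeSet =
      Nat.card {p : V × V | G.Adj p.1 p.2 ∧ p.1 ∈ S ∧ p.2 ∈ S} + 2 * M.ncard := by
  have : Finite (Option ↥S) := by
    have : Fintype ↥S := Fintype.ofFinite _
    infer_instance
  rw [two_mul_nat_card_edgeSet, Set.coe_setOf, Nat.card_congr (splitEquiv G S M hMS),
    Nat.card_sum, Nat.card_sum, Set.coe_setOf, Nat.card_coe_set_eq]
  ring

lemma ncard_set_prod {V : Type*} (A B : Set V) :
    ((A ×ˢ B : Set (V × V))).ncard = A.ncard * B.ncard := by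
  rw [← Nat.card_coe_set_eq, Nat.card_congr (Equiv.Set.prod A B), Nat.card_prod,
    Nat.card_coe_set_eq, Nat.card_coe_set_eq]

theorem stmt_7 {V : Type*} [Finite V] (G : SimpleGraph V) (A B A' B' : Set V)
    (h : IsSplit G A B A' B') :
    (Nat.card (sideGraph G (A ∪ A') A).edgeSet
        + Nat.card (sideGraph G (B ∪ B') B).edgeSet + A.ncard * B.ncard
      = Nat.card G.edgeSet + A.ncard + B.ncard) ∧
    (A.ncard + B.ncard ≤ A.ncard * B.ncard →
      Nat.card (sideGraph G (A ∪ A') A).edgeSet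
          + Nat.card (sideGraph G (B ∪ B') B).edgeSet
        ≤ Nat.card G.edgeSet) := by

  classical
  set PA : Set (V × V) := {p : V × V | G.Adj p.1 p.2 ∧ p.1 ∈ A ∪ A' ∧ p.2 ∈ A ∪ A'} with hPA
  set PB : Set (V × V) := {p : V × V | G.Adj p.1 p.2 ∧ p.1 ∈ B ∪ B' ∧ p.2 ∈ B ∪ B'} with hPB
  have hmem : ∀ v : V, v ∈ A ∨ v ∈ B ∨ v ∈ A' ∨ v ∈ B' := fun v => by
    have : v ∈ A ∪ B ∪ A' ∪ B' := h.cover ▸ Set.mem_univ v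
    simpa [Set.mem_union, or_assoc] using this
  have hsplit : {p : V × V | G.Adj p.1 p.2}
      = PA ∪ PB ∪ (A ×ˢ B : Set (V × V)) ∪ (B ×ˢ A : Set (V × V)) := by
    ext ⟨x, y⟩
    simp only [hPA, hPB, Set.mem_setOf_eq, Set.mem_union, Set.mem_prod]
    constructor
    · intro hadj
      rcases hmem x with hx | hx | hx | hx <;> rcases hmem y with hy | hy | hy | hy <;>
        first
          | exact Or.inl (Or.inl (Or.inl ⟨hadj, Or.inl hx, Or.inl hy⟩))
          | exact Or.inl (Or.inl (Or.inl ⟨hadj, Or.inl hx, Or.inr hy⟩))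
          | exact Or.inl (Or.inl (Or.inl ⟨hadj, Or.inr hx, Or.inl hy⟩))
          | exact Or.inl (Or.inl (Or.inl ⟨hadj, Or.inr hx, Or.inr hy⟩))
          | exact Or.inl (Or.inl (Or.inr ⟨hadj, Or.inl hx, Or.inl hy⟩))
          | exact Or.inl (Or.inl (Or.inr ⟨hadj, Or.inl hx, Or.inr hy⟩))
          | exact Or.inl (Or.inl (Or.inr ⟨hadj, Or.inr hx, Or.inl hy⟩))
          | exact Or.inl (Or.inl (Or.inr ⟨hadj, Or.inr hx, Or.inr hy⟩))
          | exact Or.inl (Or.inr ⟨hx, hy⟩)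
          | exact Or.inr ⟨hx, hy⟩
          | exact absurd hadj (h.noA' x hx y (Or.inl hy))
          | exact absurd hadj (h.noA' x hx y (Or.inr hy))
          | exact absurd hadj (h.noB' x hx y (Or.inl hy))
          | exact absurd hadj (h.noB' x hx y (Or.inr hy))
          | exact absurd hadj.symm (h.noA' y hy x (Or.inl hx))
          | exact absurd hadj.symm (h.noA' y hy x (Or.inr hx))
          | exact absurd hadj.symm (h.noB' y hy x (Or.inl hx))
          | exact absurd hadj.symm (h.noB' y hy x (Or.inr hx))
    · rintro (((⟨ha, -, -⟩ | ⟨hb, -, -⟩) | ⟨h1, h2⟩) | ⟨h1, h2⟩)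
      · exact ha
      · exact hb
      · exact h.complete _ h1 _ h2
      · exact (h.complete _ h2 _ h1).symm
  have dSASB : Disjoint (A ∪ A') (B ∪ B') :=
    Disjoint.union_left (Disjoint.union_right h.dAB h.dAB')
      (Disjoint.union_right h.dBA'.symm h.dA'B')
  have dSAB : Disjoint (A ∪ A') B := dSASB.mono_right Set.subset_union_left
  have dSAA : Disjoint (B ∪ B') A := dSASB.symm.mono_right Set.subset_union_left
  have d1 : Disjoint PA PB := Set.disjoint_left.mpr fun p hp hq =>
    Set.disjoint_left.mp dSASB hp.2.1 hq.2.1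
  have d2 : Disjoint (PA ∪ PB) (A ×ˢ B : Set (V × V)) := by
    rw [Set.disjoint_left]
    rintro p (hp | hp) hq
    · exact Set.disjoint_left.mp dSAB hp.2.2 hq.2
    · exact Set.disjoint_left.mp dSAA hp.2.1 hq.1
  have d3 : Disjoint (PA ∪ PB ∪ (A ×ˢ B : Set (V × V))) (B ×ˢ A : Set (V × V)) := by
    rw [Set.disjoint_left]
    rintro p ((hp | hp) | hp) hq
    · exact Set.disjoint_left.mp dSAB hp.2.1 hq.1
    · exact Set.disjoint_left.mp dSAA hp.2.2 hq.2
    · exact Set.disjoint_left.mp h.dAB hp.1 hq.1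
  have hG : 2 * Nat.card G.edgeSet
      = PA.ncard + PB.ncard + A.ncard * B.ncard + B.ncard * A.ncard := by
    rw [two_mul_nat_card_edgeSet, Nat.card_coe_set_eq, hsplit,
      Set.ncard_union_eq d3 (Set.toFinite _) (Set.toFinite _),
      Set.ncard_union_eq d2 (Set.toFinite _) (Set.toFinite _),
      Set.ncard_union_eq d1 (Set.toFinite _) (Set.toFinite _),
      ncard_set_prod, ncard_set_prod]
  have eA := side_card G (A ∪ A') A Set.subset_union_left
  have eB := side_card G (B ∪ B') B Set.subset_union_left
  rw [← hPA] at eA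
  rw [← hPB] at eB
  simp only [Nat.card_coe_set_eq] at eA eB
  have hcomm : B.ncard * A.ncard = A.ncard * B.ncard := mul_comm _ _
  rw [hcomm] at hG
  have c1 : Nat.card (sideGraph G (A ∪ A') A).edgeSet
      = (sideGraph G (A ∪ A') A).edgeSet.ncard := Nat.card_coe_set_eq _
  have c2 : Nat.card (sideGraph G (B ∪ B') B).edgeSet
      = (sideGraph G (B ∪ B') B).edgeSet.ncard := Nat.card_coe_set_eq _
  have key : Nat.card (sideGraph G (A ∪ A') A).edgeSet
      + Nat.card (sideGraph G (B ∪ B') B).edgeSet + A.ncard * B.ncard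
      = Nat.card G.edgeSet + A.ncard + B.ncard := by omega
  exact ⟨key, fun hle => by omega⟩
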